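/- arXiv:2111.03173 — 3 statements merged into one kernel-verified Lean document; each statement's English description precedes it below -/
import Mathlib

section
/- Let V be a symmetric positive definite m×m real matrix, B ∈ R^m, and 1 the all-ones vector. Then the minimization of AMSE(ω) = (ωᵀB)² + ωᵀVω over ω ∈ R^m subject to ωᵀ1 = 1 has a unique solution ω* = [(1 + BᵀV⁻¹B) V⁻¹1 − (1ᵀV⁻¹B) V⁻¹B] / [(1 + BᵀV⁻¹B)(1ᵀV⁻¹1) − (1ᵀV⁻¹B)²], and the denominator (1 + BᵀV⁻¹B)(1ᵀV⁻¹1) − (1ᵀV⁻¹B)² is strictly positive. -/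
open Matrix

/-- AMSE minimization subject to `ωᵀ1 = 1` has the stated unique solution, and
the denominator `(1 + BᵀV⁻¹B)(1ᵀV⁻¹1) − (1ᵀV⁻¹B)²` is strictly positive. -/
theorem stmt_1 (m : ℕ) (hm : 0 < m) (V : Matrix (Fin m) (Fin m) ℝ) (hV : V.PosDef)
    (B : Fin m → ℝ) :
    let one : Fin m → ℝ := fun _ => 1
    let D : ℝ := (1 + B ⬝ᵥ V⁻¹.mulVec B) * (one ⬝ᵥ V⁻¹.mulVec one) - (one ⬝ᵥ V⁻¹.mulVec B) ^ 2
    let ωstar : Fin m → ℝ :=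
      D⁻¹ • ((1 + B ⬝ᵥ V⁻¹.mulVec B) • V⁻¹.mulVec one - (one ⬝ᵥ V⁻¹.mulVec B) • V⁻¹.mulVec B)
    0 < D ∧
    ωstar ⬝ᵥ one = 1 ∧
    (∀ ω : Fin m → ℝ, ω ⬝ᵥ one = 1 →
      (ωstar ⬝ᵥ B) ^ 2 + ωstar ⬝ᵥ V.mulVec ωstar ≤ (ω ⬝ᵥ B) ^ 2 + ω ⬝ᵥ V.mulVec ω ∧
      ((ω ⬝ᵥ B) ^ 2 + ω ⬝ᵥ V.mulVec ω = (ωstar ⬝ᵥ B) ^ 2 + ωstar ⬝ᵥ V.mulVec ωstar →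
        ω = ωstar)) := by
  intro one D ωstar
  have hdet : IsUnit V.det := hV.det_pos.ne'.isUnit
  have hVV : ∀ x : Fin m → ℝ, V *ᵥ (V⁻¹ *ᵥ x) = x := by
    intro x
    rw [mulVec_mulVec, Matrix.mul_nonsing_inv _ hdet, one_mulVec]
  -- symmetry for hermitian real matrices
  have hsym : ∀ (A : Matrix (Fin m) (Fin m) ℝ), A.IsHermitian →
      ∀ x y : Fin m → ℝ, x ⬝ᵥ A *ᵥ y = y ⬝ᵥ A *ᵥ x := by
    intro A hA x y
    have hAT : Aᵀ = A := by
      ext i j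
      have := congrFun (congrFun hA.eq i) j
      simpa [Matrix.conjTranspose_apply] using this
    rw [Matrix.dotProduct_mulVec, ← Matrix.mulVec_transpose, hAT, dotProduct_comm]
  have hsymV := hsym V hV.isHermitian
  have hsymVi := hsym V⁻¹ hV.isHermitian.inv
  have hpos : ∀ x : Fin m → ℝ, x ≠ 0 → 0 < x ⬝ᵥ V *ᵥ x := by
    intro x hx
    simpa using hV.dotProduct_mulVec_pos hx
  have hnn : ∀ x : Fin m → ℝ, 0 ≤ x ⬝ᵥ V *ᵥ x := by
    intro x
    simpa using hV.posSemidef.dotProduct_mulVec_nonneg x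
  have honene : one ≠ 0 := by
    intro h
    have := congrFun h ⟨0, hm⟩
    simp [one] at this
  set u : Fin m → ℝ := V⁻¹ *ᵥ one with hu
  set w : Fin m → ℝ := V⁻¹ *ᵥ B with hw
  set a : ℝ := one ⬝ᵥ u with ha
  set b : ℝ := B ⬝ᵥ w with hb
  set s : ℝ := one ⬝ᵥ w with hs
  have huB : u ⬝ᵥ B = s := by rw [dotProduct_comm, hu, hsymVi]
  have huone : u ⬝ᵥ one = a := by rw [dotProduct_comm]
  have hwone : w ⬝ᵥ one = s := by rw [dotProduct_comm]
  have hwB : w ⬝ᵥ B = b := by rw [dotProduct_comm]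
  have hD : D = (1 + b) * a - s ^ 2 := rfl
  have hapos : 0 < a := by
    have := (hV.inv).dotProduct_mulVec_pos honene
    simpa [ha, hu] using this
  -- Cauchy-Schwarz: a*b - s^2 ≥ 0
  have hcs : 0 ≤ a * b - s ^ 2 := by
    set p : Fin m → ℝ := s • u - a • w with hp
    have hVp : V *ᵥ p = s • one - a • B := by
      rw [hp, mulVec_sub, mulVec_smul, mulVec_smul, hu, hw, hVV, hVV]
    have hval : p ⬝ᵥ V *ᵥ p = a * (a * b - s ^ 2) := by
      rw [hVp, dotProduct_sub, dotProduct_smul, dotProduct_smul, hp,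
        sub_dotProduct, sub_dotProduct, smul_dotProduct, smul_dotProduct,
        smul_dotProduct, smul_dotProduct, huone, hwone, huB, hwB]
      simp only [smul_eq_mul]
      ring
    have h0 := hnn p
    rw [hval] at h0
    exact le_of_not_gt fun h => absurd h0 (not_le.mpr (mul_neg_of_pos_of_neg hapos h))
  have hDpos : 0 < D := by
    rw [hD]
    nlinarith
  have hDne : D ≠ 0 := ne_of_gt hDpos
  have hωs : ωstar = D⁻¹ • ((1 + b) • u - s • w) := rfl
  have hωone : ωstar ⬝ᵥ one = 1 := by
    rw [hωs, smul_dotProduct, sub_dotProduct, smul_dotProduct, smul_dotProduct,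
      huone, hwone]
    simp only [smul_eq_mul]
    rw [show (1 + b) * a - s * s = D by rw [hD]; ring, inv_mul_cancel₀ hDne]
  have hωB : ωstar ⬝ᵥ B = D⁻¹ * s := by
    rw [hωs, smul_dotProduct, sub_dotProduct, smul_dotProduct, smul_dotProduct,
      huB, hwB]
    simp only [smul_eq_mul]
    ring
  have hVω : V *ᵥ ωstar = D⁻¹ • ((1 + b) • one - s • B) := by
    rw [hωs, mulVec_smul, mulVec_sub, mulVec_smul, mulVec_smul, hu, hw, hVV, hVV]
  refine ⟨hDpos, hωone, ?_⟩
  intro ω hω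
  set δ : Fin m → ℝ := ω - ωstar with hδ
  have hδone : δ ⬝ᵥ one = 0 := by
    rw [hδ, sub_dotProduct, hω, hωone, sub_self]
  have hcross : (ωstar ⬝ᵥ B) * (δ ⬝ᵥ B) + δ ⬝ᵥ V *ᵥ ωstar = 0 := by
    rw [hωB, hVω, dotProduct_smul, dotProduct_sub, dotProduct_smul, dotProduct_smul,
      hδone]
    simp only [smul_eq_mul]
    ring
  have hωeq : ω = ωstar + δ := by ext i; simp [hδ]
  have hkey : (ω ⬝ᵥ B) ^ 2 + ω ⬝ᵥ V *ᵥ ω =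
      ((ωstar ⬝ᵥ B) ^ 2 + ωstar ⬝ᵥ V *ᵥ ωstar) + ((δ ⬝ᵥ B) ^ 2 + δ ⬝ᵥ V *ᵥ δ) := by
    rw [hωeq, add_dotProduct, mulVec_add, dotProduct_add, add_dotProduct,
      add_dotProduct, hsymV ωstar δ]
    linear_combination 2 * hcross
  constructor
  · have h1 : 0 ≤ (δ ⬝ᵥ B) ^ 2 := sq_nonneg _
    have h2 := hnn δ
    rw [hkey]
    linarith
  · intro heq
    have h1 : 0 ≤ (δ ⬝ᵥ B) ^ 2 := sq_nonneg _
    have h2 := hnn δ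
    have hz : δ ⬝ᵥ V *ᵥ δ = 0 := by rw [hkey] at heq; linarith
    have hδ0 : δ = 0 := by
      by_contra hne
      exact absurd hz (ne_of_gt (hpos δ hne))
    rw [hωeq, hδ0, add_zero]
end

section
/- Let V be symmetric positive definite, B ∈ R^m, 1 the all-ones vector, and let ω* be the minimizer of AMSE(ω) = (ωᵀB)² + ωᵀVω subject to ωᵀ1 = 1. Then the minimal value satisfies AMSE(ω*) = (1 + BᵀV⁻¹B) / [(1 + BᵀV⁻¹B)(1ᵀV⁻¹1) − (1ᵀV⁻¹B)²]. -/
open Matrix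

/-- the minimal value of the constrained AMSE at the AMSE-optimal weights
`ω*` equals `(1 + BᵀV⁻¹B) / [(1 + BᵀV⁻¹B)(1ᵀV⁻¹1) − (1ᵀV⁻¹B)²]`. -/
theorem stmt_2 (m : ℕ) (hm : 0 < m) (V : Matrix (Fin m) (Fin m) ℝ) (hV : V.PosDef)
    (B : Fin m → ℝ) :
    let one : Fin m → ℝ := fun _ => 1
    let D : ℝ := (1 + B ⬝ᵥ V⁻¹.mulVec B) * (one ⬝ᵥ V⁻¹.mulVec one) - (one ⬝ᵥ V⁻¹.mulVec B) ^ 2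
    let ωstar : Fin m → ℝ :=
      D⁻¹ • ((1 + B ⬝ᵥ V⁻¹.mulVec B) • V⁻¹.mulVec one - (one ⬝ᵥ V⁻¹.mulVec B) • V⁻¹.mulVec B)
    (ωstar ⬝ᵥ B) ^ 2 + ωstar ⬝ᵥ V.mulVec ωstar = (1 + B ⬝ᵥ V⁻¹.mulVec B) / D := by
  intro one D ωstar
  have hdet : IsUnit V.det := isUnit_iff_ne_zero.2 (ne_of_gt hV.det_pos)
  have hVt : Vᵀ = V := by
    have := hV.isHermitian.eq
    simpa [Matrix.conjTranspose_eq_transpose_of_trivial] using this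
  have hinvt : (V⁻¹)ᵀ = V⁻¹ := by
    rw [Matrix.transpose_nonsing_inv, hVt]
  have hmul : ∀ x : Fin m → ℝ, V.mulVec (V⁻¹.mulVec x) = x := by
    intro x
    rw [Matrix.mulVec_mulVec, Matrix.mul_nonsing_inv V hdet, Matrix.one_mulVec]
  have hsym : ∀ x y : Fin m → ℝ, x ⬝ᵥ V⁻¹.mulVec y = y ⬝ᵥ V⁻¹.mulVec x := by
    intro x y
    rw [Matrix.dotProduct_mulVec, ← Matrix.mulVec_transpose, hinvt, dotProduct_comm]
  set u : Fin m → ℝ := V⁻¹.mulVec one with hu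
  set w : Fin m → ℝ := V⁻¹.mulVec B with hw
  set a : ℝ := 1 + B ⬝ᵥ w with ha
  set b : ℝ := one ⬝ᵥ w with hb
  set c : ℝ := one ⬝ᵥ u with hc
  have hDval : D = a * c - b ^ 2 := rfl
  have huB : u ⬝ᵥ B = b := by
    rw [hu, hb, dotProduct_comm, hsym]
  have hwB : w ⬝ᵥ B = a - 1 := by
    rw [hw, ha, dotProduct_comm]; ring
  have huo : u ⬝ᵥ one = c := by rw [hc, dotProduct_comm]
  have hwo : w ⬝ᵥ one = b := by rw [hb, dotProduct_comm]
  have hωB : ωstar ⬝ᵥ B = D⁻¹ * b := by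
    simp only [ωstar, smul_dotProduct, sub_dotProduct, smul_eq_mul,
      huB, hwB, ← hu, ← hw, ← hb]
    rw [ha]; ring
  have hVω : V.mulVec ωstar = D⁻¹ • (a • one - b • B) := by
    simp only [ωstar, Matrix.mulVec_smul, Matrix.mulVec_sub, hmul, hu, hw]
    rfl
  have hquad : ωstar ⬝ᵥ V.mulVec ωstar = D⁻¹ * (D⁻¹ * (a * D - b ^ 2)) := by
    rw [hVω]
    simp only [ωstar, smul_dotProduct, sub_dotProduct,
      dotProduct_smul, dotProduct_sub, smul_eq_mul,
      huB, hwB, huo, hwo, hDval, ← hu, ← hw, ← hb]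
    rw [ha]; ring
  rw [hωB, hquad]
  rcases eq_or_ne D 0 with hD | hD
  · simp [hD]
  · field_simp
    ring
end

section
/- Let γ > 0, ρ < 0, λ ∈ R, m ≥ 2, and c₁,…,c_m > 0, d₁,…,d_m > 0 with Σⱼ dⱼ/cⱼ = Σⱼ 1/cⱼ normalized so that the dⱼ are not all equal to 1. Define B = (λ/(1−ρ))(d₁^ρ,…,d_m^ρ)ᵀ and V = γ²(Σᵢ 1/cᵢ)·diag(c₁,…,c_m), and S_α = Σⱼ dⱼ^α/cⱼ for α ∈ {0, ρ, 2ρ}, with the normalization S₁ = S₀ (i.e. Σⱼ dⱼ/cⱼ = Σⱼ 1/cⱼ). Then the minimal constrained AMSE, min_{ωᵀ1=1} [(ωᵀB)² + ωᵀVω] = (1 + BᵀV⁻¹B)/[(1 + BᵀV⁻¹B)(1ᵀV⁻¹1) − (1ᵀV⁻¹B)²], satisfies the inequality min AMSE ≥ λ²/(1−ρ)² + γ² if and only if |λ| ≤ λ₀ := γ(1−ρ)√((S_ρ² − S₀²)/(S₀S_{2ρ} − S_ρ²)), where it is additionally asserted that S_ρ² > S₀² (given S₁ = S₀ and dⱼ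 not all 1) and S₀S_{2ρ} > S_ρ² (strict Cauchy–Schwarz). -/
open Matrix Finset

lemma tangent_lt {ρ x : ℝ} (hρ : ρ < 0) (hx : 0 < x) (hx1 : x ≠ 1) :
    1 + ρ * (x - 1) < x ^ ρ := by
  set t := -ρ with ht
  have htpos : 0 < t := by simp only [ht]; linarith
  have hxρ : x ^ ρ = (x ^ t)⁻¹ := by
    rw [show ρ = -t by simp [ht], Real.rpow_neg hx.le]
  have hxt : 0 < x ^ t := Real.rpow_pos_of_pos hx t
  have hA : t * (x - 1) ≠ 0 := mul_ne_zero htpos.ne' (sub_ne_zero.mpr hx1)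
  rcases le_or_gt t 1 with h1 | h1
  · have hb : x ^ t ≤ 1 + t * (x - 1) := by
      have := rpow_one_add_le_one_add_mul_self (s := x - 1) (by linarith) htpos.le h1
      simpa using this
    have hpos : 0 < 1 + t * (x - 1) := lt_of_lt_of_le hxt hb
    have h2 : (1 + t * (x - 1))⁻¹ ≤ (x ^ t)⁻¹ := inv_anti₀ hxt hb
    have hsq : 0 < (t * (x - 1)) ^ 2 := sq_pos_of_ne_zero hA
    have h3 : 1 + ρ * (x - 1) < (1 + t * (x - 1))⁻¹ := by
      rw [inv_eq_one_div, lt_div_iff₀ hpos]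
      nlinarith [hsq]
    rw [hxρ]; linarith
  · have hxinv : x⁻¹ ≠ 1 := by simpa [inv_eq_one] using hx1
    have hs : (-1 : ℝ) ≤ x⁻¹ - 1 := by
      have : 0 < x⁻¹ := inv_pos.mpr hx
      linarith
    have := one_add_mul_self_lt_rpow_one_add (s := x⁻¹ - 1) hs (sub_ne_zero.mpr hxinv) h1
    have hb : 1 + t * (x⁻¹ - 1) < (x ^ t)⁻¹ := by
      rw [← Real.inv_rpow hx.le]
      simpa using this
    have hkey : t * (x⁻¹ - 1) + t * (x - 1) = t * (x - 1) ^ 2 * x⁻¹ := by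
      field_simp; ring
    have hnn : 0 ≤ t * (x - 1) ^ 2 * x⁻¹ := by positivity
    rw [hxρ]
    have : ρ * (x - 1) ≤ t * (x⁻¹ - 1) := by
      have hρt : ρ = -t := by simp [ht]
      rw [hρt]; linarith
    linarith

lemma tangent_le {ρ x : ℝ} (hρ : ρ < 0) (hx : 0 < x) :
    1 + ρ * (x - 1) ≤ x ^ ρ := by
  by_cases hx1 : x = 1
  · simp [hx1]
  · exact (tangent_lt hρ hx hx1).le

set_option maxHeartbeats 1600000 in
/-- AMSE comparison of the AMSE-optimal distributed estimator with the benchmark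
Hill estimator: with `B = (λ/(1−ρ))(d₁^ρ,…,d_m^ρ)ᵀ`, `V = γ²(Σᵢ1/cᵢ)diag(c)`, normalization
`Σⱼ dⱼ/cⱼ = Σⱼ 1/cⱼ` and the `dⱼ` not all 1, one has `S_ρ² > S₀²`, `S₀S_{2ρ} > S_ρ²`, and the
minimal constrained AMSE is `≥ λ²/(1−ρ)² + γ²` iff `|λ| ≤ λ₀`. -/
theorem stmt_14 (m : ℕ) (hm : 2 ≤ m) (γ ρ lam : ℝ) (hγ : 0 < γ) (hρ : ρ < 0)
    (c d : Fin m → ℝ) (hc : ∀ j, 0 < c j) (hd : ∀ j, 0 < d j)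
    (hnorm : ∑ j, d j / c j = ∑ j, 1 / c j) (hd1 : ¬ ∀ j, d j = 1) :
    let S : ℝ → ℝ := fun α => ∑ j, d j ^ α / c j
    let B : Fin m → ℝ := fun j => lam / (1 - ρ) * d j ^ ρ
    let V : Matrix (Fin m) (Fin m) ℝ := (γ ^ 2 * ∑ i, 1 / c i) • Matrix.diagonal c
    let one : Fin m → ℝ := fun _ => 1
    let D : ℝ := (1 + B ⬝ᵥ V⁻¹.mulVec B) * (one ⬝ᵥ V⁻¹.mulVec one) - (one ⬝ᵥ V⁻¹.mulVec B) ^ 2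
    let minAMSE : ℝ := (1 + B ⬝ᵥ V⁻¹.mulVec B) / D
    let lam₀ : ℝ := γ * (1 - ρ) * Real.sqrt ((S ρ ^ 2 - S 0 ^ 2) / (S 0 * S (2 * ρ) - S ρ ^ 2))
    S 0 ^ 2 < S ρ ^ 2 ∧
    S ρ ^ 2 < S 0 * S (2 * ρ) ∧
    (lam ^ 2 / (1 - ρ) ^ 2 + γ ^ 2 ≤ minAMSE ↔ |lam| ≤ lam₀) := by
  intro S B V one D minAMSE lam₀
  have hne : (univ : Finset (Fin m)).Nonempty := by
    have hm0 : 0 < m := by omega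
    have : Nonempty (Fin m) := Fin.pos_iff_nonempty.mp hm0
    exact univ_nonempty
  set P : ℝ := ∑ j, 1 / c j with hPdef
  set Q : ℝ := ∑ j, d j ^ ρ / c j with hQdef
  set R : ℝ := ∑ j, d j ^ (2 * ρ) / c j with hRdef
  have hP : 0 < P := Finset.sum_pos (fun j _ => by have := hc j; positivity) hne
  have hQpos : 0 < Q := Finset.sum_pos
    (fun j _ => div_pos (Real.rpow_pos_of_pos (hd j) ρ) (hc j)) hne
  have hRpos : 0 < R := Finset.sum_pos
    (fun j _ => div_pos (Real.rpow_pos_of_pos (hd j) (2*ρ)) (hc j)) hne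
  have hS0 : S 0 = P := by simp only [S, Real.rpow_zero, hPdef]
  have hSρ : S ρ = Q := rfl
  have hS2ρ : S (2 * ρ) = R := rfl
  have h1ρ : (0:ℝ) < 1 - ρ := by linarith
  push_neg at hd1
  obtain ⟨j₀, hj₀⟩ := hd1
  -- Part 1 : P < Q
  have hPQ : P < Q := by
    have hlt : ∑ j, (1 + ρ * (d j - 1)) / c j < ∑ j, d j ^ ρ / c j := by
      refine Finset.sum_lt_sum (fun j _ => ?_) ⟨j₀, mem_univ _, ?_⟩
      · exact (div_le_div_iff_of_pos_right (hc j)).mpr (tangent_le hρ (hd j))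
      · exact (div_lt_div_iff_of_pos_right (hc j₀)).mpr (tangent_lt hρ (hd j₀) hj₀)
    have heq : ∑ j, (1 + ρ * (d j - 1)) / c j = P := by
      have h1 : ∀ j ∈ (univ : Finset (Fin m)),
          (1 + ρ * (d j - 1)) / c j
            = 1 / c j + ρ * (d j / c j) - ρ * (1 / c j) := by
        intro j _
        simp only [div_eq_mul_inv]
        ring
      rw [Finset.sum_congr rfl h1, Finset.sum_sub_distrib, Finset.sum_add_distrib,
        ← Finset.mul_sum, ← Finset.mul_sum, hnorm]
      ring
    rw [heq] at hlt
    exact hlt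
  have part1 : S 0 ^ 2 < S ρ ^ 2 := by
    rw [hS0, hSρ]
    exact pow_lt_pow_left₀ hPQ hP.le two_ne_zero
  -- Part 2 : Q^2 < P * R
  obtain ⟨k, hk⟩ : ∃ k, d k ≠ d j₀ := by
    by_contra hall
    push_neg at hall
    have : ∑ j, d j / c j = d j₀ * P := by
      rw [hPdef, Finset.mul_sum]
      refine Finset.sum_congr rfl fun j _ => ?_
      rw [hall j]
      field_simp
    rw [hnorm] at this
    have h2 : P * (d j₀ - 1) = 0 := by linarith [this]
    rcases mul_eq_zero.mp h2 with h | h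
    · exact absurd h hP.ne'
    · exact hj₀ (by linarith)
  have hxne : d k ^ ρ ≠ d j₀ ^ ρ := by
    intro h
    exact hk ((Real.rpow_left_inj (hd k).le (hd j₀).le hρ.ne).mp h)
  set tt : ℝ := -(Q / P) with htt
  have hsumpos : 0 < ∑ j, (d j ^ ρ + tt) ^ 2 / c j := by
    have hterm : ∀ j ∈ (univ : Finset (Fin m)), 0 ≤ (d j ^ ρ + tt) ^ 2 / c j :=
      fun j _ => div_nonneg (sq_nonneg _) (hc j).le
    by_cases h : d j₀ ^ ρ + tt = 0
    · refine Finset.sum_pos' hterm ⟨k, mem_univ _, ?_⟩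
      have hk0 : d k ^ ρ + tt ≠ 0 := by
        intro h'
        apply hxne
        linarith [h, h']
      exact div_pos (sq_pos_of_ne_zero hk0) (hc k)
    · exact Finset.sum_pos' hterm ⟨j₀, mem_univ _, div_pos (sq_pos_of_ne_zero h) (hc j₀)⟩
  have hexp : ∑ j, (d j ^ ρ + tt) ^ 2 / c j = R + 2 * tt * Q + tt ^ 2 * P := by
    have h1 : ∀ j ∈ (univ : Finset (Fin m)),
        (d j ^ ρ + tt) ^ 2 / c j
          = d j ^ (2 * ρ) / c j + 2 * tt * (d j ^ ρ / c j) + tt ^ 2 * (1 / c j) := by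
      intro j _
      have h2ρ : d j ^ (2 * ρ) = d j ^ ρ * d j ^ ρ := by
        rw [← Real.rpow_add (hd j)]; ring_nf
      rw [h2ρ]
      simp only [div_eq_mul_inv]
      ring
    rw [Finset.sum_congr rfl h1, Finset.sum_add_distrib, Finset.sum_add_distrib,
      ← Finset.mul_sum, ← Finset.mul_sum, ← hPdef, ← hQdef, ← hRdef]
  have part2 : Q ^ 2 < P * R := by
    have hident : P * R - Q ^ 2 = P * (R + 2 * tt * Q + tt ^ 2 * P) := by
      rw [htt]
      field_simp
      ring
    nlinarith [mul_pos hP (hexp ▸ hsumpos)]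
  -- Part 3 : matrix computation
  set s : ℝ := γ ^ 2 * P with hs
  have hspos : 0 < s := by positivity
  have hV : V = Matrix.diagonal (fun j => s * c j) := by
    show (γ ^ 2 * P) • Matrix.diagonal c = _
    rw [← Matrix.diagonal_smul]
    congr 1
  have hVinv : V⁻¹ = Matrix.diagonal (fun j => (s * c j)⁻¹) := by
    apply Matrix.inv_eq_right_inv
    rw [hV, Matrix.diagonal_mul_diagonal]
    have hfun : (fun j => s * c j * (s * c j)⁻¹) = fun _ : Fin m => (1:ℝ) :=
      funext fun j => mul_inv_cancel₀ (mul_pos hspos (hc j)).ne'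
    rw [hfun, Matrix.diagonal_one]
  have h2ρ : ∀ j, d j ^ (2 * ρ) = d j ^ ρ * d j ^ ρ := fun j => by
    rw [← Real.rpow_add (hd j)]; ring_nf
  have hBB : B ⬝ᵥ V⁻¹.mulVec B = (lam / (1 - ρ)) ^ 2 * R / s := by
    rw [hVinv]
    simp only [dotProduct, Matrix.mulVec_diagonal]
    rw [hRdef, show (lam / (1 - ρ)) ^ 2 * (∑ j, d j ^ (2*ρ) / c j) / s
        = ∑ j, (lam / (1 - ρ)) ^ 2 * (d j ^ (2*ρ) / c j) / s by
      rw [Finset.mul_sum, Finset.sum_div]]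
    refine Finset.sum_congr rfl fun j _ => ?_
    show lam / (1 - ρ) * d j ^ ρ * ((s * c j)⁻¹ * (lam / (1 - ρ) * d j ^ ρ)) = _
    rw [h2ρ j]
    simp only [div_eq_mul_inv, mul_inv]
    ring
  have h1B : one ⬝ᵥ V⁻¹.mulVec B = lam / (1 - ρ) * Q / s := by
    rw [hVinv]
    simp only [dotProduct, Matrix.mulVec_diagonal]
    rw [hQdef, show lam / (1 - ρ) * (∑ j, d j ^ ρ / c j) / s
        = ∑ j, lam / (1 - ρ) * (d j ^ ρ / c j) / s by
      rw [Finset.mul_sum, Finset.sum_div]]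
    refine Finset.sum_congr rfl fun j _ => ?_
    show (1:ℝ) * ((s * c j)⁻¹ * (lam / (1 - ρ) * d j ^ ρ)) = _
    simp only [div_eq_mul_inv, mul_inv]
    ring
  have h11 : one ⬝ᵥ V⁻¹.mulVec one = P / s := by
    rw [hVinv]
    simp only [dotProduct, Matrix.mulVec_diagonal]
    rw [hPdef, Finset.sum_div]
    refine Finset.sum_congr rfl fun j _ => ?_
    show (1:ℝ) * ((s * c j)⁻¹ * 1) = _
    simp only [div_eq_mul_inv, mul_inv]
    ring
  -- D in closed form
  set N : ℝ := γ ^ 2 * P ^ 2 + (lam / (1 - ρ)) ^ 2 * (P * R - Q ^ 2) with hN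
  have hNpos : 0 < N := by
    have h1 : 0 < γ ^ 2 * P ^ 2 := by positivity
    have h2 : 0 ≤ (lam / (1 - ρ)) ^ 2 * (P * R - Q ^ 2) :=
      mul_nonneg (sq_nonneg _) (by linarith)
    rw [hN]; linarith
  have hγne : γ ≠ 0 := hγ.ne'
  have hPne : P ≠ 0 := hP.ne'
  have hρne : (1:ℝ) - ρ ≠ 0 := h1ρ.ne'
  have hDeq : D = N / (γ ^ 4 * P ^ 2) := by
    show (1 + B ⬝ᵥ V⁻¹.mulVec B) * (one ⬝ᵥ V⁻¹.mulVec one) - (one ⬝ᵥ V⁻¹.mulVec B) ^ 2 = _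
    rw [hBB, h1B, h11, hN, hs]
    field_simp
    ring
  have hDpos : 0 < D := by
    rw [hDeq]
    exact div_pos hNpos (by positivity)
  -- the equivalence
  refine ⟨part1, by rw [hSρ, hS0, hS2ρ]; exact part2, ?_⟩
  have step1 : lam ^ 2 / (1 - ρ) ^ 2 + γ ^ 2 ≤ minAMSE ↔
      lam ^ 2 / (1 - ρ) ^ 2 * (P * R - Q ^ 2) ≤ γ ^ 2 * (Q ^ 2 - P ^ 2) := by
    rw [show minAMSE = (1 + B ⬝ᵥ V⁻¹.mulVec B) / D from rfl, le_div_iff₀ hDpos]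
    have hid : (1 + B ⬝ᵥ V⁻¹.mulVec B) - (lam ^ 2 / (1 - ρ) ^ 2 + γ ^ 2) * D
        = lam ^ 2 / (1 - ρ) ^ 2
          * (γ ^ 2 * (Q ^ 2 - P ^ 2) - lam ^ 2 / (1 - ρ) ^ 2 * (P * R - Q ^ 2))
          / (γ ^ 4 * P ^ 2) := by
      rw [hBB, hDeq, hN, hs]
      field_simp
      ring
    constructor
    · intro h
      have h0 : 0 ≤ lam ^ 2 / (1 - ρ) ^ 2
          * (γ ^ 2 * (Q ^ 2 - P ^ 2) - lam ^ 2 / (1 - ρ) ^ 2 * (P * R - Q ^ 2))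
          / (γ ^ 4 * P ^ 2) := by rw [← hid]; linarith
      have hden : (0:ℝ) < γ ^ 4 * P ^ 2 := by positivity
      have h0' : 0 ≤ lam ^ 2 / (1 - ρ) ^ 2
          * (γ ^ 2 * (Q ^ 2 - P ^ 2) - lam ^ 2 / (1 - ρ) ^ 2 * (P * R - Q ^ 2)) := by
        by_contra hcon
        push_neg at hcon
        have := div_neg_of_neg_of_pos hcon hden
        linarith
      rcases eq_or_lt_of_le (by positivity : (0:ℝ) ≤ lam ^ 2 / (1 - ρ) ^ 2) with hT | hT
      · have hQ2P2 : (0:ℝ) ≤ Q ^ 2 - P ^ 2 := by nlinarith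
        rw [← hT]
        nlinarith [mul_nonneg (sq_nonneg γ) hQ2P2]
      · nlinarith [((mul_nonneg_iff_of_pos_left hT).mp h0')]
    · intro h
      have h0' : 0 ≤ lam ^ 2 / (1 - ρ) ^ 2
          * (γ ^ 2 * (Q ^ 2 - P ^ 2) - lam ^ 2 / (1 - ρ) ^ 2 * (P * R - Q ^ 2)) :=
        mul_nonneg (by positivity) (by linarith)
      have hden : (0:ℝ) < γ ^ 4 * P ^ 2 := by positivity
      have := div_nonneg h0' hden.le
      linarith [hid ▸ this]
  have hlam₀sq : lam₀ ^ 2 = γ ^ 2 * (1 - ρ) ^ 2 * ((Q ^ 2 - P ^ 2) / (P * R - Q ^ 2)) := by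
    show (γ * (1 - ρ) * Real.sqrt ((S ρ ^ 2 - S 0 ^ 2) / (S 0 * S (2 * ρ) - S ρ ^ 2))) ^ 2 = _
    rw [hSρ, hS0, hS2ρ]
    have harg : (0:ℝ) ≤ (Q ^ 2 - P ^ 2) / (P * R - Q ^ 2) :=
      div_nonneg (by nlinarith) (by linarith)
    rw [mul_pow, mul_pow, Real.sq_sqrt harg]
  have hlam₀nn : 0 ≤ lam₀ := by
    show 0 ≤ γ * (1 - ρ) * Real.sqrt _
    positivity
  have step2 : |lam| ≤ lam₀ ↔
      lam ^ 2 / (1 - ρ) ^ 2 * (P * R - Q ^ 2) ≤ γ ^ 2 * (Q ^ 2 - P ^ 2) := by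
    have habs : |lam| ≤ lam₀ ↔ lam ^ 2 ≤ lam₀ ^ 2 := by
      constructor
      · intro h
        nlinarith [sq_abs lam, abs_nonneg lam]
      · intro h
        nlinarith [sq_abs lam, abs_nonneg lam]
    rw [habs, hlam₀sq]
    have hPRQ : (0:ℝ) < P * R - Q ^ 2 := by linarith
    rw [show γ ^ 2 * (1 - ρ) ^ 2 * ((Q ^ 2 - P ^ 2) / (P * R - Q ^ 2))
        = γ ^ 2 * (1 - ρ) ^ 2 * (Q ^ 2 - P ^ 2) / (P * R - Q ^ 2) by ring,
      le_div_iff₀ hPRQ,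
      show lam ^ 2 / (1 - ρ) ^ 2 * (P * R - Q ^ 2)
        = lam ^ 2 * (P * R - Q ^ 2) / (1 - ρ) ^ 2 by ring,
      div_le_iff₀ (by positivity : (0:ℝ) < (1 - ρ) ^ 2)]
    constructor <;> intro h <;> linarith
  rw [step1, ← step2]
end
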